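/- For all positive integers j < k and l < m with (j,k) ≠ (l,m) and j² - k² - l² + m² = 0, one has j⁻⁴ - k⁻⁴ - l⁻⁴ + m⁻⁴ ≠ 0. -/
import Mathlib


theorem resonance_nondegeneracy (j k l m : ℕ) (hj : 0 < j) (hl : 0 < l)
    (hjk : j < k) (hlm : l < m) (hne : (j, k) ≠ (l, m))
    (hres : j ^ 2 + m ^ 2 = k ^ 2 + l ^ 2) :
    1 / (j : ℝ) ^ 4 - 1 / (k : ℝ) ^ 4 - 1 / (l : ℝ) ^ 4 + 1 / (m : ℝ) ^ 4 ≠ 0 := by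
  intro h
  have hjR : (0:ℝ) < (j:ℝ) := by exact_mod_cast hj
  have hkR : (0:ℝ) < (k:ℝ) := by exact_mod_cast hj.trans hjk
  have hlR : (0:ℝ) < (l:ℝ) := by exact_mod_cast hl
  have hmR : (0:ℝ) < (m:ℝ) := by exact_mod_cast hl.trans hlm
  set a := (j:ℝ)^2 with ha_def
  set b := (m:ℝ)^2 with hb_def
  set c := (k:ℝ)^2 with hc_def
  set d := (l:ℝ)^2 with hd_def
  have h4j : (j:ℝ)^4 = a^2 := by rw [ha_def]; ring
  have h4k : (k:ℝ)^4 = c^2 := by rw [hc_def]; ring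
  have h4l : (l:ℝ)^4 = d^2 := by rw [hd_def]; ring
  have h4m : (m:ℝ)^4 = b^2 := by rw [hb_def]; ring
  have ha : 0 < a := by positivity
  have hb : 0 < b := by positivity
  have hc : 0 < c := by positivity
  have hd : 0 < d := by positivity
  have hs : a + b = c + d := by
    rw [ha_def, hb_def, hc_def, hd_def]
    exact_mod_cast hres
  rw [h4j, h4k, h4l, h4m] at h
  have haj : (j:ℝ)^2 = a := ha_def.symm
  have hck : (k:ℝ)^2 = c := hc_def.symm
  have hdl : (l:ℝ)^2 = d := hd_def.symm
  have hbm : (m:ℝ)^2 = b := hb_def.symm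
  clear_value a b c d
  have hE : c^2*d^2*(a^2+b^2) = a^2*b^2*(c^2+d^2) := by
    field_simp at h
    linarith [h]
  clear h h4j h4k h4l h4m
  have hpq : a * b = c * d := by
    have key : (c*d - a*b) * ((c+d)^2*(a*b + c*d) - 2*(a*b)*(c*d)) = 0 := by
      linear_combination hE - (c*d)^2*(a+b+c+d) * hs
    have h0 : (c+d)^2 = (a+b)^2 := by rw [hs]
    have h1 : 4*(a*b) ≤ (c+d)^2 := by nlinarith [sq_nonneg (a-b), h0]
    have h2 : 4*(c*d) ≤ (c+d)^2 := by nlinarith [sq_nonneg (c-d)]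
    have h1' : 4*(a*b)*(c*d) ≤ (c+d)^2*(c*d) :=
      mul_le_mul_of_nonneg_right h1 (mul_pos hc hd).le
    have h2' : 4*(c*d)*(a*b) ≤ (c+d)^2*(a*b) :=
      mul_le_mul_of_nonneg_right h2 (mul_pos ha hb).le
    have hexp : (c+d)^2*(a*b+c*d) = (c+d)^2*(a*b) + (c+d)^2*(c*d) := by ring
    have hpqpos : 0 < (a*b)*(c*d) := mul_pos (mul_pos ha hb) (mul_pos hc hd)
    have hpos : (c+d)^2*(a*b + c*d) - 2*(a*b)*(c*d) > 0 := by linarith [h1', h2', hexp, hpqpos]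
    rcases mul_eq_zero.mp key with h1 | h2
    · linarith
    · linarith
  have hfac : (a - c) * (a - d) = 0 := by linear_combination a * hs - hpq
  rcases mul_eq_zero.mp hfac with h1 | h2
  · -- a = c, so j = k, contradicting j < k
    have : (j:ℝ)^2 = (k:ℝ)^2 := by rw [haj, hck]; linarith
    have hjk2 : j^2 = k^2 := by exact_mod_cast this
    have : j^2 < k^2 := Nat.pow_lt_pow_left hjk (by norm_num)
    omega
  · -- a = d, so j = l, and then m = k, contradicting hne
    have hjl2 : j^2 = l^2 := by
      have : (j:ℝ)^2 = (l:ℝ)^2 := by rw [haj, hdl]; linarith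
      exact_mod_cast this
    have hmk2 : m^2 = k^2 := by
      have : (m:ℝ)^2 = (k:ℝ)^2 := by rw [hbm, hck]; linarith
      exact_mod_cast this
    have hjl : j = l := Nat.pow_left_injective (by norm_num) hjl2
    have hmk : m = k := Nat.pow_left_injective (by norm_num) hmk2
    exact hne (by rw [hjl, hmk.symm])
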